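/- First derivative of φ at the base pressure: let γ > 1, ρ_k > 0, p_k > 0 and μ² = (γ−1)/(γ+1), and let φ be the piecewise function φ(σ) = ρ_k·(σ/p_k)^(1/γ) for σ ≤ p_k and φ(σ) = ρ_k·(σ + μ²p_k)/(μ²σ + p_k) for σ > p_k. Then φ(p_k) = ρ_k and φ has derivative φ′(p_k) = ρ_k/(γ·p_k) = 1/c_k² at σ = p_k, where c_k = √(γp_k/ρ_k). -/

import Mathlib

/-- The density function `φ` of the Lax-curve parametrisation: isentropic rarefaction
branch for `σ ≤ p`, shock branch for `σ > p`, based at density `ρ` and pressure `p`. -/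
noncomputable def laxPhi (γ ρ p : ℝ) (σ : ℝ) : ℝ :=
  if σ ≤ p then
    ρ * (σ / p) ^ (1 / γ)
  else
    ρ * (σ + ((γ - 1) / (γ + 1)) * p) / (((γ - 1) / (γ + 1)) * σ + p)

/-- First derivative of `φ` at the base pressure: `φ(p_k) = ρ_k` and
`φ′(p_k) = 1/c_k²` with `c_k = √(γp_k/ρ_k)`. -/
theorem laxPhi_value_and_deriv_at_base
    (γ ρk pk ck : ℝ) (hγ : 1 < γ) (hρ : 0 < ρk) (hp : 0 < pk)
    (hck : ck = Real.sqrt (γ * pk / ρk)) :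
    laxPhi γ ρk pk pk = ρk ∧
    HasDerivAt (laxPhi γ ρk pk) (ρk / (γ * pk)) pk ∧
    ρk / (γ * pk) = 1 / ck ^ 2 := by
  have hγ0 : (0:ℝ) < γ := lt_trans one_pos hγ
  have hγ1 : γ + 1 ≠ 0 := by positivity
  set a : ℝ := (γ - 1) / (γ + 1) with ha
  have ha0 : 0 < a := div_pos (by linarith) (by linarith)
  have ha1 : a < 1 := by
    rw [ha, div_lt_one (by linarith)]; linarith
  have hval : laxPhi γ ρk pk pk = ρk := by
    simp [laxPhi, div_self hp.ne']
  refine ⟨hval, ?_, ?_⟩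
  · -- rarefaction branch derivative on Iic
    have hf : HasDerivAt (fun σ => ρk * (σ / pk) ^ (1 / γ)) (ρk / (γ * pk)) pk := by
      have h1 : HasDerivAt (fun σ : ℝ => σ / pk) (1 / pk) pk := by
        simpa using (hasDerivAt_id pk).div_const pk
      have h2 := h1.rpow_const (p := 1 / γ) (Or.inl (by rw [div_self hp.ne']; norm_num))
      have h3 := h2.const_mul ρk
      have : ρk * (1 / pk * (1 / γ) * (pk / pk) ^ (1 / γ - 1)) = ρk / (γ * pk) := by
        rw [div_self hp.ne', Real.one_rpow]
        field_simp
      rwa [this] at h3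
    -- shock branch derivative
    have hd : a * pk + pk ≠ 0 := by positivity
    have hg : HasDerivAt (fun σ => ρk * (σ + a * pk) / (a * σ + pk)) (ρk / (γ * pk)) pk := by
      have hn : HasDerivAt (fun σ : ℝ => ρk * (σ + a * pk)) ρk pk := by
        simpa using ((hasDerivAt_id pk).add_const (a * pk)).const_mul ρk
      have hdd : HasDerivAt (fun σ : ℝ => a * σ + pk) a pk := by
        simpa using ((hasDerivAt_id pk).const_mul a).add_const pk
      have h := hn.div hdd hd
      have heq : (ρk * (a * pk + pk) - ρk * (pk + a * pk) * a) / (a * pk + pk) ^ 2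
          = ρk / (γ * pk) := by
        rw [div_eq_div_iff (by positivity) (by positivity), ha]
        field_simp
        ring
      rwa [heq] at h
    have hIic : HasDerivWithinAt (laxPhi γ ρk pk) (ρk / (γ * pk)) (Set.Iic pk) pk := by
      apply (hf.hasDerivWithinAt).congr
      · intro x hx
        rw [Set.mem_Iic] at hx
        simp only [laxPhi, if_pos hx]
      · simp only [laxPhi, if_pos le_rfl]
    have hIci : HasDerivWithinAt (laxPhi γ ρk pk) (ρk / (γ * pk)) (Set.Ici pk) pk := by
      have hgpk : ρk * (pk + a * pk) / (a * pk + pk) = ρk := by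
        have h2 : pk + a * pk = a * pk + pk := by ring
        rw [h2, mul_div_assoc, div_self hd, mul_one]
      apply (hg.hasDerivWithinAt).congr
      · intro x hx
        rcases eq_or_lt_of_le (Set.mem_Ici.mp hx) with h | h
        · subst h
          rw [hval, hgpk]
        · simp only [laxPhi, if_neg (not_le.mpr h), ha]
      · rw [hval, hgpk]
    have := hIic.union hIci
    rw [Set.Iic_union_Ici] at this
    exact this.hasDerivAt (by simp)
  · rw [hck, Real.sq_sqrt (by positivity), one_div_div]
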